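/- For the double star DS_{p,q} with p, q ≥ 1 (the tree obtained by joining the centers of stars K_{1,p} and K_{1,q}, which has n = p + q + 2 vertices), the middle 3-rainbow domination number is γ*_{r3}(DS_{p,q}) = p + q + 3 = n + 1. -/

import Mathlib

open SimpleGraph Finset

/-- A `k`-rainbow dominating function on a graph `H`. -/
def IsRDF {W : Type*} (H : SimpleGraph W) (k : ℕ) (f : W → Finset (Fin k)) : Prop :=
  ∀ w, f w = ∅ → ∀ c : Fin k, ∃ u, H.Adj w u ∧ c ∈ f u

/-- The weight of a rainbow dominating function. -/
noncomputable def rdfWeight {W : Type*} [Fintype W] {k : ℕ} (f : W → Finset (Fin k)) : ℕ :=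
  ∑ w, (f w).card

/-- The `k`-rainbow domination number of a graph. -/
noncomputable def rdn {W : Type*} [Fintype W] (H : SimpleGraph W) (k : ℕ) : ℕ :=
  sInf {n | ∃ f : W → Finset (Fin k), IsRDF H k f ∧ rdfWeight f = n}

/-- The middle graph of `G`, on vertex set `V(G) ⊕ E(G)`. -/
def middleGraph {V : Type*} (G : SimpleGraph V) : SimpleGraph (V ⊕ G.edgeSet) where
  Adj x y :=
    match x, y with
    | Sum.inl _, Sum.inl _ => False
    | Sum.inl v, Sum.inr e => v ∈ (e : Sym2 V)
    | Sum.inr e, Sum.inl v => v ∈ (e : Sym2 V)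
    | Sum.inr e, Sum.inr f => e ≠ f ∧ ∃ v, v ∈ (e : Sym2 V) ∧ v ∈ (f : Sym2 V)
  symm := by
    refine ⟨?_⟩
    rintro (v | e) (w | f) h
    · exact h.elim
    · exact h
    · exact h
    · exact ⟨Ne.symm h.1, h.2.imp fun v hv => ⟨hv.2, hv.1⟩⟩
  loopless := by
    refine ⟨?_⟩
    rintro (v | e) h
    · exact h.elim
    · exact h.1 rfl

/-- The middle `k`-rainbow domination number `γ*_{rk}(G)`. -/
noncomputable def mrdn {V : Type*} [Fintype V] (G : SimpleGraph V) (k : ℕ) : ℕ :=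
  letI := Classical.decEq V
  letI : DecidableRel G.Adj := fun _ _ => Classical.dec _
  rdn (middleGraph G) k

/-- The `k`-rainbow domatic number: the maximum size of a family of `k`-rainbow
dominating functions with `∑ i |f i v| ≤ k` for each vertex `v`. -/
noncomputable def rdomatic {W : Type*} (H : SimpleGraph W) (k : ℕ) : ℕ :=
  sSup {d | ∃ F : Fin d → W → Finset (Fin k), Function.Injective F ∧
    (∀ i, IsRDF H k (F i)) ∧ ∀ w, (∑ i, (F i w).card) ≤ k}

/-- The matching number `α'(G)`. -/
noncomputable def matchingNumber {V : Type*} [Fintype V] (G : SimpleGraph V) : ℕ :=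
  sSup {n | ∃ M : Finset (Sym2 V), ↑M ⊆ G.edgeSet ∧
    (∀ e ∈ M, ∀ f ∈ M, e ≠ f → ∀ v : V, ¬(v ∈ e ∧ v ∈ f)) ∧ M.card = n}

/-- The double star `DS_{p,q}` on `p+q+2` vertices, with centers `0` and `1`,
the leaves of center `0` being `2, …, p+1` and those of center `1` being `p+2, …, p+q+1`. -/
def doubleStar (p q : ℕ) : SimpleGraph (Fin (p + q + 2)) :=
  fromEdgeSet (({s(0, 1)} : Set (Sym2 (Fin (p + q + 2)))) ∪
    {e | ∃ i : Fin (p + q + 2),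
      (2 ≤ i.val ∧ i.val < p + 2 ∧ e = s(0, i)) ∨ (p + 2 ≤ i.val ∧ e = s(1, i))})

namespace S17

variable (p q : ℕ)

lemma vz : ((0 : Fin (p+q+2)) : ℕ) = 0 := rfl
lemma vo : ((1 : Fin (p+q+2)) : ℕ) = 1 := rfl

/-- The leaf edge of leaf `i`. -/
def Es (i : Fin (p+q+2)) : Sym2 (Fin (p+q+2)) :=
  if i.val < p + 2 then s(0, i) else s(1, i)

lemma mem_ES_iff (e : Sym2 (Fin (p+q+2))) :
    e ∈ (doubleStar p q).edgeSet ↔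
      e = s(0,1) ∨ ∃ i : Fin (p+q+2), 2 ≤ i.val ∧ e = Es p q i := by
  rw [doubleStar, SimpleGraph.edgeSet_fromEdgeSet]
  constructor
  · rintro ⟨h, -⟩
    rcases h with h | ⟨i, ⟨h2, hlt, rfl⟩ | ⟨h2, rfl⟩⟩
    · exact Or.inl h
    · exact Or.inr ⟨i, h2, by simp [Es, hlt]⟩
    · exact Or.inr ⟨i, by omega, by simp [Es, show ¬ (i.val < p+2) by omega]⟩
  · rintro (rfl | ⟨i, h2, rfl⟩)
    · refine ⟨Or.inl rfl, ?_⟩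
      simp only [Sym2.mem_diagSet, Sym2.mk_isDiag_iff]
      intro h
      have := congrArg Fin.val h
      simp [vz, vo] at this
    · unfold Es
      split
      · refine ⟨Or.inr ⟨i, Or.inl ⟨h2, by omega, rfl⟩⟩, ?_⟩
        simp only [Sym2.mem_diagSet, Sym2.mk_isDiag_iff]
        intro h
        have := congrArg Fin.val h
        rw [vz] at this
        omega
      · refine ⟨Or.inr ⟨i, Or.inr ⟨by omega, rfl⟩⟩, ?_⟩
        simp only [Sym2.mem_diagSet, Sym2.mk_isDiag_iff]
        intro h
        have := congrArg Fin.val h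
        rw [vo] at this
        omega

lemma he0 : s(0,1) ∈ (doubleStar p q).edgeSet := (mem_ES_iff p q _).2 (Or.inl rfl)

lemma hEs {i : Fin (p+q+2)} (h : 2 ≤ i.val) : Es p q i ∈ (doubleStar p q).edgeSet :=
  (mem_ES_iff p q _).2 (Or.inr ⟨i, h, rfl⟩)

end S17
namespace S17

variable (p q : ℕ)

lemma valcontra {i j : Fin (p+q+2)} (h : i = j) : i.val = j.val := congrArg Fin.val h

lemma Es_ne_e0 {i : Fin (p+q+2)} (h : 2 ≤ i.val) : Es p q i ≠ s(0,1) := by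
  unfold Es
  split <;> intro hh <;> rw [Sym2.eq_iff] at hh <;>
    rcases hh with ⟨h1, h2⟩ | ⟨h1, h2⟩ <;>
    · have t1 := valcontra p q h1
      have t2 := valcontra p q h2
      simp [vz, vo, -Fin.val_eq_zero_iff] at t1 t2 <;> omega

lemma Es_inj {i j : Fin (p+q+2)} (hi : 2 ≤ i.val) (hj : 2 ≤ j.val)
    (h : Es p q i = Es p q j) : i = j := by
  unfold Es at h
  split at h <;> split at h <;> rw [Sym2.eq_iff] at h <;>
    rcases h with ⟨h1, h2⟩ | ⟨h1, h2⟩ <;>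
    first
      | exact h2
      | exact h1
      | · exfalso
          have t1 := valcontra p q h1
          have t2 := valcontra p q h2
          simp [vz, vo] at t1 t2 <;> omega

/-- any edge containing leaf `i` is its leaf edge -/
lemma F3 {i : Fin (p+q+2)} (h2 : 2 ≤ i.val) {e : Sym2 (Fin (p+q+2))}
    (he : e ∈ (doubleStar p q).edgeSet) (hie : i ∈ e) : e = Es p q i := by
  rcases (mem_ES_iff p q e).1 he with rfl | ⟨j, hj2, rfl⟩
  · exfalso
    rw [Sym2.mem_iff] at hie
    rcases hie with h | h <;>
    · have t := valcontra p q h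
      simp [vz, vo, -Fin.val_eq_zero_iff] at t <;> omega
  · have hij : i = j := by
      unfold Es at hie
      split at hie <;> rw [Sym2.mem_iff] at hie <;>
        rcases hie with h | h <;>
        first
          | exact h
          | · exfalso
              have t := valcontra p q h
              simp [vz, vo, -Fin.val_eq_zero_iff] at t <;> omega
    rw [hij]

/-- edges containing vertex 0 -/
lemma F1 {e : Sym2 (Fin (p+q+2))} (he : e ∈ (doubleStar p q).edgeSet)
    (h0 : (0 : Fin (p+q+2)) ∈ e) :
    e = s(0,1) ∨ ∃ i : Fin (p+q+2), 2 ≤ i.val ∧ i.val < p + 2 ∧ e = Es p q i := by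
  rcases (mem_ES_iff p q e).1 he with rfl | ⟨j, hj2, rfl⟩
  · exact Or.inl rfl
  · right
    refine ⟨j, hj2, ?_, rfl⟩
    unfold Es at h0
    split at h0
    · assumption
    · exfalso
      rw [Sym2.mem_iff] at h0
      rcases h0 with h | h <;>
      · have t := valcontra p q h
        simp [vz, vo] at t <;> omega

/-- edges containing vertex 1 -/
lemma F2 {e : Sym2 (Fin (p+q+2))} (he : e ∈ (doubleStar p q).edgeSet)
    (h0 : (1 : Fin (p+q+2)) ∈ e) :
    e = s(0,1) ∨ ∃ i : Fin (p+q+2), p + 2 ≤ i.val ∧ e = Es p q i := by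
  rcases (mem_ES_iff p q e).1 he with rfl | ⟨j, hj2, rfl⟩
  · exact Or.inl rfl
  · right
    refine ⟨j, ?_, rfl⟩
    unfold Es at h0
    split at h0
    · exfalso
      rw [Sym2.mem_iff] at h0
      rcases h0 with h | h <;>
      · have t := valcontra p q h
        simp [vz, vo] at t <;> omega
    · omega

end S17
namespace S17

variable (p q : ℕ)

def e0v : (doubleStar p q).edgeSet := ⟨s(0,1), he0 p q⟩

def eVe (i : Fin (p+q+2)) : (doubleStar p q).edgeSet :=
  if h : 2 ≤ i.val then ⟨Es p q i, hEs p q h⟩ else e0v p q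

lemma eVe_of (i : Fin (p+q+2)) (h : 2 ≤ i.val) : eVe p q i = ⟨Es p q i, hEs p q h⟩ := by
  unfold eVe; rw [dif_pos h]

lemma adj_inl_elim {v : Fin (p+q+2)} {u}
    (h : (middleGraph (doubleStar p q)).Adj (Sum.inl v) u) :
    ∃ e : (doubleStar p q).edgeSet, u = Sum.inr e ∧ v ∈ (e : Sym2 (Fin (p+q+2))) := by
  match u with
  | Sum.inl w => exact absurd h (by intro hh; exact hh)
  | Sum.inr e => exact ⟨e, rfl, h⟩

lemma adj_inr_elim {e : (doubleStar p q).edgeSet} {u}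
    (h : (middleGraph (doubleStar p q)).Adj (Sum.inr e) u) :
    (∃ v : Fin (p+q+2), u = Sum.inl v ∧ v ∈ (e : Sym2 (Fin (p+q+2)))) ∨
    (∃ e' : (doubleStar p q).edgeSet, u = Sum.inr e' ∧ e ≠ e' ∧
      ∃ v, v ∈ (e : Sym2 (Fin (p+q+2))) ∧ v ∈ (e' : Sym2 (Fin (p+q+2)))) := by
  match u with
  | Sum.inl w => exact Or.inl ⟨w, rfl, h⟩
  | Sum.inr e' => exact Or.inr ⟨e', rfl, h.1, h.2⟩

lemma adj_inl_inr {v : Fin (p+q+2)} {e : (doubleStar p q).edgeSet}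
    (h : v ∈ (e : Sym2 (Fin (p+q+2)))) :
    (middleGraph (doubleStar p q)).Adj (Sum.inl v) (Sum.inr e) := h

lemma adj_inr_inr {e e' : (doubleStar p q).edgeSet} (hne : e ≠ e')
    (h : ∃ v, v ∈ (e : Sym2 (Fin (p+q+2))) ∧ v ∈ (e' : Sym2 (Fin (p+q+2)))) :
    (middleGraph (doubleStar p q)).Adj (Sum.inr e) (Sum.inr e') := ⟨hne, h⟩

lemma cover {W : Type*} [DecidableEq W] {H : SimpleGraph W} {f : W → Finset (Fin 3)}
    (hf : IsRDF H 3 f) {w : W} (hw : f w = ∅) {N : Finset W}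
    (hN : ∀ u, H.Adj w u → u ∈ N) : 3 ≤ ∑ u ∈ N, (f u).card := by
  have hsub : (Finset.univ : Finset (Fin 3)) ⊆ N.biUnion fun u => f u := by
    intro c _
    obtain ⟨u, hu, hc⟩ := hf w hw c
    exact Finset.mem_biUnion.2 ⟨u, hN u hu, hc⟩
  calc 3 = (Finset.univ : Finset (Fin 3)).card := by simp
    _ ≤ (N.biUnion fun u => f u).card := Finset.card_le_card hsub
    _ ≤ _ := Finset.card_biUnion_le

def L0 : Finset (Fin (p+q+2)) :=
  (Finset.Ico 2 (p+2)).attachFin (fun m hm => by rw [Finset.mem_Ico] at hm; omega)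

def L1 : Finset (Fin (p+q+2)) :=
  (Finset.Ico (p+2) (p+q+2)).attachFin (fun m hm => by rw [Finset.mem_Ico] at hm; omega)

lemma mem_L0 {i : Fin (p+q+2)} : i ∈ L0 p q ↔ 2 ≤ i.val ∧ i.val < p + 2 := by
  simp [L0, Finset.mem_attachFin, Finset.mem_Ico]

lemma mem_L1 {i : Fin (p+q+2)} : i ∈ L1 p q ↔ p + 2 ≤ i.val := by
  simp only [L1, Finset.mem_attachFin, Finset.mem_Ico]
  omega

lemma card_L0 : (L0 p q).card = p := by
  rw [L0, Finset.card_attachFin, Nat.card_Ico]; omega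

lemma card_L1 : (L1 p q).card = q := by
  rw [L1, Finset.card_attachFin, Nat.card_Ico]; omega

lemma disj_L0_L1 : Disjoint (L0 p q) (L1 p q) := by
  rw [Finset.disjoint_left]
  intro i h0 h1
  rw [mem_L0] at h0; rw [mem_L1] at h1
  omega

lemma eVe_ne_e0v {i : Fin (p+q+2)} (h : 2 ≤ i.val) : eVe p q i ≠ e0v p q := by
  rw [eVe_of p q i h]
  intro hh
  exact Es_ne_e0 p q h (congrArg Subtype.val hh)

lemma eVe_inj {i j : Fin (p+q+2)} (hi : 2 ≤ i.val) (hj : 2 ≤ j.val)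
    (h : eVe p q i = eVe p q j) : i = j := by
  rw [eVe_of p q i hi, eVe_of p q j hj] at h
  exact Es_inj p q hi hj (congrArg Subtype.val h)

end S17
namespace S17

variable (p q : ℕ)

noncomputable def fUB : (Fin (p+q+2) ⊕ (doubleStar p q).edgeSet) → Finset (Fin 3) :=
  fun w => match w with
  | Sum.inl v => if 2 ≤ v.val then {0} else ∅
  | Sum.inr e => if (e : Sym2 (Fin (p+q+2))) = s(0,1) then Finset.univ else ∅

lemma fUB_isRDF : IsRDF (middleGraph (doubleStar p q)) 3 (fUB p q) := by
  intro w hw c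
  match w with
  | Sum.inl v =>
    refine ⟨Sum.inr (e0v p q), adj_inl_inr p q ?_, ?_⟩
    · have hv : ¬ (2 ≤ v.val) := by
        intro h2
        simp only [fUB, if_pos h2] at hw
        exact (Finset.singleton_ne_empty _) hw
      show v ∈ s(0,1)
      rw [Sym2.mem_iff]
      have : v.val = 0 ∨ v.val = 1 := by omega
      rcases this with h | h
      · exact Or.inl (Fin.ext (by rw [h, vz]))
      · exact Or.inr (Fin.ext (by rw [h, vo]))
    · show c ∈ fUB p q (Sum.inr (e0v p q))
      simp [fUB, e0v]
  | Sum.inr e =>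
    have hne : (e : Sym2 (Fin (p+q+2))) ≠ s(0,1) := by
      intro h
      simp only [fUB, if_pos h] at hw
      have : c ∈ (Finset.univ : Finset (Fin 3)) := Finset.mem_univ c
      rw [hw] at this
      exact absurd this (Finset.notMem_empty c)
    refine ⟨Sum.inr (e0v p q), adj_inr_inr p q ?_ ?_, by simp [fUB, e0v]⟩
    · intro h; exact hne (congrArg Subtype.val h)
    · rcases (mem_ES_iff p q e).1 e.2 with h | ⟨i, h2, hEq⟩
      · exact absurd h hne
      · show ∃ v, v ∈ (e : Sym2 (Fin (p+q+2))) ∧ v ∈ s(0,1)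
        rw [hEq]
        unfold Es
        split
        · exact ⟨0, by simp, by simp⟩
        · exact ⟨1, by simp, by simp⟩

lemma fUB_weight [Fintype ((doubleStar p q).edgeSet : Set _)] :
    rdfWeight (fUB p q) = p + q + 3 := by
  rw [rdfWeight, Fintype.sum_sum_type]
  have h1 : ∑ v : Fin (p+q+2), (fUB p q (Sum.inl v)).card = p + q := by
    have : ∀ v : Fin (p+q+2), (fUB p q (Sum.inl v)).card = if 2 ≤ v.val then 1 else 0 := by
      intro v
      simp only [fUB]
      split <;> simp
    rw [Finset.sum_congr rfl (fun v _ => this v)]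
    rw [Finset.sum_ite, Finset.sum_const, Finset.sum_const, smul_eq_mul, smul_eq_mul,
      mul_one, mul_zero, add_zero]
    have hfil : Finset.univ.filter (fun v : Fin (p+q+2) => 2 ≤ v.val)
        = (Finset.Ico 2 (p+q+2)).attachFin (fun m hm => by rw [Finset.mem_Ico] at hm; omega) := by
      ext i
      simp only [Finset.mem_filter, Finset.mem_univ, true_and, Finset.mem_attachFin,
        Finset.mem_Ico]
      exact ⟨fun h => ⟨h, i.isLt⟩, fun h => h.1⟩
    rw [hfil, Finset.card_attachFin, Nat.card_Ico]
    omega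
  have h2 : ∑ e : (doubleStar p q).edgeSet, (fUB p q (Sum.inr e)).card = 3 := by
    have : ∀ e : (doubleStar p q).edgeSet,
        (fUB p q (Sum.inr e)).card = if e = e0v p q then 3 else 0 := by
      intro e
      simp only [fUB]
      by_cases h : (e : Sym2 (Fin (p+q+2))) = s(0,1)
      · rw [if_pos h, if_pos (Subtype.ext h)]
        simp
      · rw [if_neg h, if_neg (fun hh => h (congrArg Subtype.val hh))]
        simp
    rw [Finset.sum_congr rfl (fun e _ => this e)]
    rw [Finset.sum_ite_eq' Finset.univ (e0v p q) (fun _ => 3)]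
    simp
  rw [h1, h2]

end S17
namespace S17

variable (p q : ℕ)

def i0 (hp : 1 ≤ p) : Fin (p+q+2) := ⟨2, by omega⟩
def j0 (hq : 1 ≤ q) : Fin (p+q+2) := ⟨p+2, by omega⟩

lemma i0val (hp : 1 ≤ p) : (i0 p q hp).val = 2 := rfl
lemma j0val (hq : 1 ≤ q) : (j0 p q hq).val = p + 2 := rfl

lemma eVe_i0 (hp : 1 ≤ p) : (eVe p q (i0 p q hp) : Sym2 (Fin (p+q+2))) = s(0, i0 p q hp) := by
  rw [eVe_of p q _ (by rw [i0val])]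
  show Es p q (i0 p q hp) = _
  unfold Es
  rw [if_pos (by rw [i0val]; omega)]

lemma eVe_j0 (hq : 1 ≤ q) :
    (eVe p q (j0 p q hq) : Sym2 (Fin (p+q+2))) = s(1, j0 p q hq) := by
  rw [eVe_of p q _ (by rw [j0val]; omega)]
  show Es p q (j0 p q hq) = _
  unfold Es
  rw [if_neg (by rw [j0val]; omega)]

lemma i0_mem (hp : 1 ≤ p) : i0 p q hp ∈ L0 p q := (mem_L0 p q).2 ⟨by rw [i0val], by rw [i0val]; omega⟩
lemma j0_mem (hq : 1 ≤ q) : j0 p q hq ∈ L1 p q := (mem_L1 p q).2 (by rw [j0val])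

end S17
namespace S17
variable (p q : ℕ)
lemma mem_L0_val : ∀ {i : Fin (p+q+2)}, i ∈ L0 p q ↔ 2 ≤ i.val ∧ i.val < p + 2 :=
  mem_L0 p q
lemma mem_L1_val : ∀ {i : Fin (p+q+2)}, i ∈ L1 p q ↔ p + 2 ≤ i.val :=
  mem_L1 p q
end S17
namespace S17

variable (p q : ℕ)

lemma lower [Fintype ((doubleStar p q).edgeSet : Set (Sym2 (Fin (p+q+2))))]
    (hp : 1 ≤ p) (hq : 1 ≤ q)
    (f : (Fin (p+q+2) ⊕ (doubleStar p q).edgeSet) → Finset (Fin 3))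
    (hf : IsRDF (middleGraph (doubleStar p q)) 3 f) :
    p + q + 3 ≤ rdfWeight f := by
  classical
  by_contra hcon
  push_neg at hcon
  -- leaf key fact
  have key1 : ∀ i : Fin (p+q+2), 2 ≤ i.val →
      (f (Sum.inl i)).card = 0 → 3 ≤ (f (Sum.inr (eVe p q i))).card := by
    intro i h2 hx0
    have hemp : f (Sum.inl i) = ∅ := Finset.card_eq_zero.mp hx0
    have hall : ∀ c : Fin 3, c ∈ f (Sum.inr (eVe p q i)) := by
      intro c
      obtain ⟨u, hadj, hc⟩ := hf _ hemp c
      obtain ⟨e, rfl, hie⟩ := adj_inl_elim p q hadj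
      have he : (e : Sym2 (Fin (p+q+2))) = Es p q i := F3 p q h2 e.2 hie
      have heq : e = eVe p q i := by rw [eVe_of p q i h2]; exact Subtype.ext he
      rwa [heq] at hc
    calc 3 = (Finset.univ : Finset (Fin 3)).card := by simp
      _ ≤ _ := Finset.card_le_card (fun c _ => hall c)
  -- per-leaf sums over L0
  have hS0 : p + 2 * (∑ i ∈ L0 p q, (if (f (Sum.inl i)).card = 0 then 1 else 0)) ≤
      ∑ i ∈ L0 p q, ((f (Sum.inl i)).card + (f (Sum.inr (eVe p q i))).card) := by
    have step : ∀ i ∈ L0 p q, 1 + 2 * (if (f (Sum.inl i)).card = 0 then 1 else 0) ≤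
        (f (Sum.inl i)).card + (f (Sum.inr (eVe p q i))).card := by
      intro i hi
      have h2 : 2 ≤ i.val := by have := (mem_L0 p q).1 hi; omega
      by_cases h : (f (Sum.inl i)).card = 0
      · have := key1 i h2 h; rw [if_pos h]; omega
      · rw [if_neg h]; omega
    calc p + 2 * (∑ i ∈ L0 p q, (if (f (Sum.inl i)).card = 0 then 1 else 0))
        = ∑ i ∈ L0 p q, (1 + 2 * (if (f (Sum.inl i)).card = 0 then 1 else 0)) := by
          rw [Finset.sum_add_distrib, Finset.sum_const, card_L0, smul_eq_mul, mul_one,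
            Finset.mul_sum]
      _ ≤ _ := Finset.sum_le_sum step
  have hS1 : q + 2 * (∑ i ∈ L1 p q, (if (f (Sum.inl i)).card = 0 then 1 else 0)) ≤
      ∑ i ∈ L1 p q, ((f (Sum.inl i)).card + (f (Sum.inr (eVe p q i))).card) := by
    have step : ∀ i ∈ L1 p q, 1 + 2 * (if (f (Sum.inl i)).card = 0 then 1 else 0) ≤
        (f (Sum.inl i)).card + (f (Sum.inr (eVe p q i))).card := by
      intro i hi
      have h2 : 2 ≤ i.val := by have := (mem_L1 p q).1 hi; omega
      by_cases h : (f (Sum.inl i)).card = 0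
      · have := key1 i h2 h; rw [if_pos h]; omega
      · rw [if_neg h]; omega
    calc q + 2 * (∑ i ∈ L1 p q, (if (f (Sum.inl i)).card = 0 then 1 else 0))
        = ∑ i ∈ L1 p q, (1 + 2 * (if (f (Sum.inl i)).card = 0 then 1 else 0)) := by
          rw [Finset.sum_add_distrib, Finset.sum_const, card_L1, smul_eq_mul, mul_one,
            Finset.mul_sum]
      _ ≤ _ := Finset.sum_le_sum step
  have hY0 : (∑ i ∈ L0 p q, (f (Sum.inr (eVe p q i))).card) + p ≤
      (∑ i ∈ L0 p q, ((f (Sum.inl i)).card + (f (Sum.inr (eVe p q i))).card)) +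
      (∑ i ∈ L0 p q, (if (f (Sum.inl i)).card = 0 then 1 else 0)) := by
    have step : ∀ i ∈ L0 p q, (f (Sum.inr (eVe p q i))).card + 1 ≤
        ((f (Sum.inl i)).card + (f (Sum.inr (eVe p q i))).card) +
        (if (f (Sum.inl i)).card = 0 then 1 else 0) := by
      intro i hi
      by_cases h : (f (Sum.inl i)).card = 0
      · rw [if_pos h]; omega
      · rw [if_neg h]; omega
    calc (∑ i ∈ L0 p q, (f (Sum.inr (eVe p q i))).card) + p
        = ∑ i ∈ L0 p q, ((f (Sum.inr (eVe p q i))).card + 1) := by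
          rw [Finset.sum_add_distrib, Finset.sum_const, card_L0, smul_eq_mul, mul_one]
      _ ≤ _ := Finset.sum_le_sum step
      _ = _ := Finset.sum_add_distrib
  have hY1 : (∑ i ∈ L1 p q, (f (Sum.inr (eVe p q i))).card) + q ≤
      (∑ i ∈ L1 p q, ((f (Sum.inl i)).card + (f (Sum.inr (eVe p q i))).card)) +
      (∑ i ∈ L1 p q, (if (f (Sum.inl i)).card = 0 then 1 else 0)) := by
    have step : ∀ i ∈ L1 p q, (f (Sum.inr (eVe p q i))).card + 1 ≤
        ((f (Sum.inl i)).card + (f (Sum.inr (eVe p q i))).card) +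
        (if (f (Sum.inl i)).card = 0 then 1 else 0) := by
      intro i hi
      by_cases h : (f (Sum.inl i)).card = 0
      · rw [if_pos h]; omega
      · rw [if_neg h]; omega
    calc (∑ i ∈ L1 p q, (f (Sum.inr (eVe p q i))).card) + q
        = ∑ i ∈ L1 p q, ((f (Sum.inr (eVe p q i))).card + 1) := by
          rw [Finset.sum_add_distrib, Finset.sum_const, card_L1, smul_eq_mul, mul_one]
      _ ≤ _ := Finset.sum_le_sum step
      _ = _ := Finset.sum_add_distrib
  have hsplit0 : ∑ i ∈ L0 p q, ((f (Sum.inl i)).card + (f (Sum.inr (eVe p q i))).card) =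
      (∑ i ∈ L0 p q, (f (Sum.inl i)).card) + (∑ i ∈ L0 p q, (f (Sum.inr (eVe p q i))).card) :=
    Finset.sum_add_distrib
  have hsplit1 : ∑ i ∈ L1 p q, ((f (Sum.inl i)).card + (f (Sum.inr (eVe p q i))).card) =
      (∑ i ∈ L1 p q, (f (Sum.inl i)).card) + (∑ i ∈ L1 p q, (f (Sum.inr (eVe p q i))).card) :=
    Finset.sum_add_distrib
  -- total weight lower bound
  have hW : (f (Sum.inl (0 : Fin (p+q+2)))).card + (f (Sum.inl (1 : Fin (p+q+2)))).card +
      (∑ i ∈ L0 p q, (f (Sum.inl i)).card) + (∑ i ∈ L1 p q, (f (Sum.inl i)).card) +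
      ((f (Sum.inr (e0v p q))).card + (∑ i ∈ L0 p q, (f (Sum.inr (eVe p q i))).card) +
       (∑ i ∈ L1 p q, (f (Sum.inr (eVe p q i))).card)) ≤ rdfWeight f := by
    rw [rdfWeight, Fintype.sum_sum_type]
    have h1notin : (1 : Fin (p+q+2)) ∉ L0 p q ∪ L1 p q := by
      simp only [Finset.mem_union, mem_L0, mem_L1, vo]
      omega
    have h0notin : (0 : Fin (p+q+2)) ∉ insert (1 : Fin (p+q+2)) (L0 p q ∪ L1 p q) := by
      intro hmem
      rcases Finset.mem_insert.1 hmem with h | h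
      · have h' := congrArg Fin.val h
        rw [vz, vo] at h'
        omega
      · rw [Finset.mem_union, mem_L0, mem_L1, vz] at h
        omega
    have hA : ∑ v ∈ insert (0 : Fin (p+q+2)) (insert (1 : Fin (p+q+2)) (L0 p q ∪ L1 p q)),
        (f (Sum.inl v)).card ≤ ∑ v : Fin (p+q+2), (f (Sum.inl v)).card :=
      Finset.sum_le_sum_of_subset (Finset.subset_univ _)
    rw [Finset.sum_insert h0notin, Finset.sum_insert h1notin,
      Finset.sum_union (disj_L0_L1 p q)] at hA
    have hnm : e0v p q ∉ (L0 p q ∪ L1 p q).image (eVe p q) := by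
      intro hmem
      obtain ⟨i, hi, hEq⟩ := Finset.mem_image.1 hmem
      have h2 : 2 ≤ i.val := by
        rw [Finset.mem_union, mem_L0, mem_L1] at hi; omega
      exact eVe_ne_e0v p q h2 hEq
    have hinj : ∀ i ∈ L0 p q ∪ L1 p q, ∀ j ∈ L0 p q ∪ L1 p q,
        eVe p q i = eVe p q j → i = j := by
      intro i hi j hj h
      rw [Finset.mem_union, mem_L0, mem_L1] at hi hj
      exact eVe_inj p q (by omega) (by omega) h
    have hB : ∑ e ∈ insert (e0v p q) ((L0 p q ∪ L1 p q).image (eVe p q)),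
        (f (Sum.inr e)).card ≤ ∑ e : (doubleStar p q).edgeSet, (f (Sum.inr e)).card :=
      Finset.sum_le_sum_of_subset (Finset.subset_univ _)
    rw [Finset.sum_insert hnm, Finset.sum_image hinj,
      Finset.sum_union (disj_L0_L1 p q)] at hB
    omega
  -- center constraints
  have hC0 : (f (Sum.inl (0 : Fin (p+q+2)))).card = 0 →
      3 ≤ (f (Sum.inr (e0v p q))).card + ∑ i ∈ L0 p q, (f (Sum.inr (eVe p q i))).card := by
    intro h0
    have hemp : f (Sum.inl (0 : Fin (p+q+2))) = ∅ := Finset.card_eq_zero.mp h0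
    have hN : ∀ u, (middleGraph (doubleStar p q)).Adj (Sum.inl (0 : Fin (p+q+2))) u →
        u ∈ insert (Sum.inr (e0v p q) : Fin (p+q+2) ⊕ (doubleStar p q).edgeSet)
          ((L0 p q).image (fun i => Sum.inr (eVe p q i))) := by
      intro u hadj
      obtain ⟨e, rfl, h0e⟩ := adj_inl_elim p q hadj
      rcases F1 p q e.2 h0e with he | ⟨i, h2, hlt, he⟩
      · have heq : e = e0v p q := Subtype.ext he
        rw [heq]; exact Finset.mem_insert_self _ _
      · have heq : e = eVe p q i := by rw [eVe_of p q i h2]; exact Subtype.ext he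
        refine Finset.mem_insert_of_mem (Finset.mem_image.2 ⟨i, (mem_L0 p q).2 ⟨h2, hlt⟩, ?_⟩)
        rw [heq]
    have hsum := cover hf hemp hN
    have hnm : (Sum.inr (e0v p q) : Fin (p+q+2) ⊕ (doubleStar p q).edgeSet)
        ∉ (L0 p q).image (fun i => Sum.inr (eVe p q i)) := by
      intro hmem
      obtain ⟨i, hi, hEq⟩ := Finset.mem_image.1 hmem
      exact eVe_ne_e0v p q ((mem_L0 p q).1 hi).1 (Sum.inr.inj hEq)
    have hinj : ∀ i ∈ L0 p q, ∀ j ∈ L0 p q,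
        (Sum.inr (eVe p q i) : Fin (p+q+2) ⊕ (doubleStar p q).edgeSet) = Sum.inr (eVe p q j)
          → i = j := fun i hi j hj h =>
      eVe_inj p q ((mem_L0 p q).1 hi).1 ((mem_L0 p q).1 hj).1 (Sum.inr.inj h)
    rw [Finset.sum_insert hnm, Finset.sum_image hinj] at hsum
    exact hsum
  have hC1 : (f (Sum.inl (1 : Fin (p+q+2)))).card = 0 →
      3 ≤ (f (Sum.inr (e0v p q))).card + ∑ i ∈ L1 p q, (f (Sum.inr (eVe p q i))).card := by
    intro h0
    have hemp : f (Sum.inl (1 : Fin (p+q+2))) = ∅ := Finset.card_eq_zero.mp h0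
    have hN : ∀ u, (middleGraph (doubleStar p q)).Adj (Sum.inl (1 : Fin (p+q+2))) u →
        u ∈ insert (Sum.inr (e0v p q) : Fin (p+q+2) ⊕ (doubleStar p q).edgeSet)
          ((L1 p q).image (fun i => Sum.inr (eVe p q i))) := by
      intro u hadj
      obtain ⟨e, rfl, h0e⟩ := adj_inl_elim p q hadj
      rcases F2 p q e.2 h0e with he | ⟨i, hge, he⟩
      · have heq : e = e0v p q := Subtype.ext he
        rw [heq]; exact Finset.mem_insert_self _ _
      · have heq : e = eVe p q i := by
          rw [eVe_of p q i (by omega)]; exact Subtype.ext he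
        refine Finset.mem_insert_of_mem (Finset.mem_image.2 ⟨i, (mem_L1 p q).2 hge, ?_⟩)
        rw [heq]
    have hsum := cover hf hemp hN
    have hnm : (Sum.inr (e0v p q) : Fin (p+q+2) ⊕ (doubleStar p q).edgeSet)
        ∉ (L1 p q).image (fun i => Sum.inr (eVe p q i)) := by
      intro hmem
      obtain ⟨i, hi, hEq⟩ := Finset.mem_image.1 hmem
      exact eVe_ne_e0v p q (by have := (mem_L1 p q).1 hi; omega) (Sum.inr.inj hEq)
    have hinj : ∀ i ∈ L1 p q, ∀ j ∈ L1 p q,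
        (Sum.inr (eVe p q i) : Fin (p+q+2) ⊕ (doubleStar p q).edgeSet) = Sum.inr (eVe p q j)
          → i = j := fun i hi j hj h =>
      eVe_inj p q (by have := (mem_L1 p q).1 hi; omega) (by have := (mem_L1 p q).1 hj; omega)
        (Sum.inr.inj h)
    rw [Finset.sum_insert hnm, Finset.sum_image hinj] at hsum
    exact hsum
  by_cases ha : (f (Sum.inl (0 : Fin (p+q+2)))).card = 0 <;>
    by_cases hb : (f (Sum.inl (1 : Fin (p+q+2)))).card = 0
  · have c0 := hC0 ha
    have c1 := hC1 hb
    omega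
  · have c0 := hC0 ha
    omega
  · have c1 := hC1 hb
    omega
  · -- both centers nonzero
    have hyi0le : (f (Sum.inr (eVe p q (i0 p q hp)))).card ≤
        ∑ i ∈ L0 p q, (f (Sum.inr (eVe p q i))).card :=
      Finset.single_le_sum (f := fun i => (f (Sum.inr (eVe p q i))).card)
        (fun i _ => Nat.zero_le _) (i0_mem p q hp)
    have hyj0le : (f (Sum.inr (eVe p q (j0 p q hq)))).card ≤
        ∑ i ∈ L1 p q, (f (Sum.inr (eVe p q i))).card :=
      Finset.single_le_sum (f := fun i => (f (Sum.inr (eVe p q i))).card)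
        (fun i _ => Nat.zero_le _) (j0_mem p q hq)
    have hyi0 : (f (Sum.inr (eVe p q (i0 p q hp)))).card = 0 := by omega
    have hyj0 : (f (Sum.inr (eVe p q (j0 p q hq)))).card = 0 := by omega
    -- leaf edge constraints
    have hC4 : 3 ≤ (f (Sum.inl (0 : Fin (p+q+2)))).card + (f (Sum.inl (i0 p q hp))).card +
        (f (Sum.inr (e0v p q))).card +
        ∑ i ∈ (L0 p q).erase (i0 p q hp), (f (Sum.inr (eVe p q i))).card := by
      have hemp : f (Sum.inr (eVe p q (i0 p q hp))) = ∅ := Finset.card_eq_zero.mp hyi0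
      have hv2 : 2 ≤ (i0 p q hp).val := by rw [i0val]
      have hN : ∀ u, (middleGraph (doubleStar p q)).Adj (Sum.inr (eVe p q (i0 p q hp))) u →
          u ∈ insert (Sum.inl (0 : Fin (p+q+2)) : Fin (p+q+2) ⊕ (doubleStar p q).edgeSet)
            (insert (Sum.inl (i0 p q hp))
              (insert (Sum.inr (e0v p q))
                (((L0 p q).erase (i0 p q hp)).image (fun i => Sum.inr (eVe p q i))))) := by
        intro u hadj
        rcases adj_inr_elim p q hadj with ⟨v, rfl, hv⟩ | ⟨e', rfl, hne, v, hv, hv'⟩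
        · rw [eVe_i0, Sym2.mem_iff] at hv
          rcases hv with rfl | rfl
          · exact Finset.mem_insert_self _ _
          · exact Finset.mem_insert_of_mem (Finset.mem_insert_self _ _)
        · rw [eVe_i0, Sym2.mem_iff] at hv
          rcases hv with rfl | rfl
          · rcases F1 p q e'.2 hv' with he | ⟨j, hj2', hlt, he⟩
            · have heq : e' = e0v p q := Subtype.ext he
              rw [heq]
              exact Finset.mem_insert_of_mem (Finset.mem_insert_of_mem
                (Finset.mem_insert_self _ _))
            · have hj2 : 2 ≤ j.val := by omega
              have heq : e' = eVe p q j := by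
                rw [eVe_of p q j hj2]; exact Subtype.ext he
              have hji : j ≠ i0 p q hp := by
                intro hj; apply hne; rw [heq, hj]
              refine Finset.mem_insert_of_mem (Finset.mem_insert_of_mem
                (Finset.mem_insert_of_mem (Finset.mem_image.2
                  ⟨j, Finset.mem_erase.2 ⟨hji, (mem_L0 p q).2 ⟨hj2, hlt⟩⟩, ?_⟩)))
              rw [heq]
          · exfalso
            apply hne
            have he' : (e' : Sym2 (Fin (p+q+2))) = Es p q (i0 p q hp) := F3 p q hv2 e'.2 hv'
            rw [eVe_of p q _ hv2]
            exact (Subtype.ext he').symm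
      have hsum := cover hf hemp hN
      have hinj : ∀ i ∈ (L0 p q).erase (i0 p q hp), ∀ j ∈ (L0 p q).erase (i0 p q hp),
          (Sum.inr (eVe p q i) : Fin (p+q+2) ⊕ (doubleStar p q).edgeSet) = Sum.inr (eVe p q j)
            → i = j := by
        intro i hi j hj h
        have hi2 : 2 ≤ i.val := by
          have := (mem_L0_val p q).1 (Finset.mem_of_mem_erase hi); omega
        have hj2 : 2 ≤ j.val := by
          have := (mem_L0_val p q).1 (Finset.mem_of_mem_erase hj); omega
        exact eVe_inj p q hi2 hj2 (Sum.inr.inj h)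
      have hn3 : (Sum.inr (e0v p q) : Fin (p+q+2) ⊕ (doubleStar p q).edgeSet)
          ∉ ((L0 p q).erase (i0 p q hp)).image (fun i => Sum.inr (eVe p q i)) := by
        intro hmem
        obtain ⟨i, hi, hEq⟩ := Finset.mem_image.1 hmem
        have hi2 : 2 ≤ i.val := by
          have := (mem_L0_val p q).1 (Finset.mem_of_mem_erase hi); omega
        exact eVe_ne_e0v p q hi2 (Sum.inr.inj hEq)
      have hn2 : (Sum.inl (i0 p q hp) : Fin (p+q+2) ⊕ (doubleStar p q).edgeSet)
          ∉ insert (Sum.inr (e0v p q))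
            (((L0 p q).erase (i0 p q hp)).image (fun i => Sum.inr (eVe p q i))) := by
        intro hmem
        rcases Finset.mem_insert.1 hmem with h | hmem2
        · exact Sum.inl_ne_inr h
        · obtain ⟨i, hi, hEq⟩ := Finset.mem_image.1 hmem2
          exact Sum.inr_ne_inl hEq
      have hn1 : (Sum.inl (0 : Fin (p+q+2)) : Fin (p+q+2) ⊕ (doubleStar p q).edgeSet)
          ∉ insert (Sum.inl (i0 p q hp))
            (insert (Sum.inr (e0v p q))
              (((L0 p q).erase (i0 p q hp)).image (fun i => Sum.inr (eVe p q i)))) := by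
        intro hmem
        rcases Finset.mem_insert.1 hmem with h | hmem2
        · have h' := congrArg Fin.val (Sum.inl.inj h)
          rw [vz, i0val] at h'
          omega
        · rcases Finset.mem_insert.1 hmem2 with h | hmem3
          · exact Sum.inl_ne_inr h
          · obtain ⟨i, hi, hEq⟩ := Finset.mem_image.1 hmem3
            exact Sum.inr_ne_inl hEq
      rw [Finset.sum_insert hn1, Finset.sum_insert hn2, Finset.sum_insert hn3,
        Finset.sum_image hinj] at hsum
      omega
    have hC5 : 3 ≤ (f (Sum.inl (1 : Fin (p+q+2)))).card + (f (Sum.inl (j0 p q hq))).card +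
        (f (Sum.inr (e0v p q))).card +
        ∑ i ∈ (L1 p q).erase (j0 p q hq), (f (Sum.inr (eVe p q i))).card := by
      have hemp : f (Sum.inr (eVe p q (j0 p q hq))) = ∅ := Finset.card_eq_zero.mp hyj0
      have hv2 : 2 ≤ (j0 p q hq).val := by rw [j0val]; omega
      have hN : ∀ u, (middleGraph (doubleStar p q)).Adj (Sum.inr (eVe p q (j0 p q hq))) u →
          u ∈ insert (Sum.inl (1 : Fin (p+q+2)) : Fin (p+q+2) ⊕ (doubleStar p q).edgeSet)
            (insert (Sum.inl (j0 p q hq))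
              (insert (Sum.inr (e0v p q))
                (((L1 p q).erase (j0 p q hq)).image (fun i => Sum.inr (eVe p q i))))) := by
        intro u hadj
        rcases adj_inr_elim p q hadj with ⟨v, rfl, hv⟩ | ⟨e', rfl, hne, v, hv, hv'⟩
        · rw [eVe_j0, Sym2.mem_iff] at hv
          rcases hv with rfl | rfl
          · exact Finset.mem_insert_self _ _
          · exact Finset.mem_insert_of_mem (Finset.mem_insert_self _ _)
        · rw [eVe_j0, Sym2.mem_iff] at hv
          rcases hv with rfl | rfl
          · rcases F2 p q e'.2 hv' with he | ⟨j, hge, he⟩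
            · have heq : e' = e0v p q := Subtype.ext he
              rw [heq]
              exact Finset.mem_insert_of_mem (Finset.mem_insert_of_mem
                (Finset.mem_insert_self _ _))
            · have hj2 : 2 ≤ j.val := by omega
              have heq : e' = eVe p q j := by
                rw [eVe_of p q j hj2]; exact Subtype.ext he
              have hji : j ≠ j0 p q hq := by
                intro hj; apply hne; rw [heq, hj]
              refine Finset.mem_insert_of_mem (Finset.mem_insert_of_mem
                (Finset.mem_insert_of_mem (Finset.mem_image.2
                  ⟨j, Finset.mem_erase.2 ⟨hji, (mem_L1 p q).2 hge⟩, ?_⟩)))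
              rw [heq]
          · exfalso
            apply hne
            have he' : (e' : Sym2 (Fin (p+q+2))) = Es p q (j0 p q hq) := F3 p q hv2 e'.2 hv'
            rw [eVe_of p q _ hv2]
            exact (Subtype.ext he').symm
      have hsum := cover hf hemp hN
      have hinj : ∀ i ∈ (L1 p q).erase (j0 p q hq), ∀ j ∈ (L1 p q).erase (j0 p q hq),
          (Sum.inr (eVe p q i) : Fin (p+q+2) ⊕ (doubleStar p q).edgeSet) = Sum.inr (eVe p q j)
            → i = j := by
        intro i hi j hj h
        have hi2 : 2 ≤ i.val := by
          have := (mem_L1_val p q).1 (Finset.mem_of_mem_erase hi); omega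
        have hj2 : 2 ≤ j.val := by
          have := (mem_L1_val p q).1 (Finset.mem_of_mem_erase hj); omega
        exact eVe_inj p q hi2 hj2 (Sum.inr.inj h)
      have hn3 : (Sum.inr (e0v p q) : Fin (p+q+2) ⊕ (doubleStar p q).edgeSet)
          ∉ ((L1 p q).erase (j0 p q hq)).image (fun i => Sum.inr (eVe p q i)) := by
        intro hmem
        obtain ⟨i, hi, hEq⟩ := Finset.mem_image.1 hmem
        have hi2 : 2 ≤ i.val := by
          have := (mem_L1_val p q).1 (Finset.mem_of_mem_erase hi); omega
        exact eVe_ne_e0v p q hi2 (Sum.inr.inj hEq)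
      have hn2 : (Sum.inl (j0 p q hq) : Fin (p+q+2) ⊕ (doubleStar p q).edgeSet)
          ∉ insert (Sum.inr (e0v p q))
            (((L1 p q).erase (j0 p q hq)).image (fun i => Sum.inr (eVe p q i))) := by
        intro hmem
        rcases Finset.mem_insert.1 hmem with h | hmem2
        · exact Sum.inl_ne_inr h
        · obtain ⟨i, hi, hEq⟩ := Finset.mem_image.1 hmem2
          exact Sum.inr_ne_inl hEq
      have hn1 : (Sum.inl (1 : Fin (p+q+2)) : Fin (p+q+2) ⊕ (doubleStar p q).edgeSet)
          ∉ insert (Sum.inl (j0 p q hq))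
            (insert (Sum.inr (e0v p q))
              (((L1 p q).erase (j0 p q hq)).image (fun i => Sum.inr (eVe p q i)))) := by
        intro hmem
        rcases Finset.mem_insert.1 hmem with h | hmem2
        · have h' := congrArg Fin.val (Sum.inl.inj h)
          rw [vo, j0val] at h'
          omega
        · rcases Finset.mem_insert.1 hmem2 with h | hmem3
          · exact Sum.inl_ne_inr h
          · obtain ⟨i, hi, hEq⟩ := Finset.mem_image.1 hmem3
            exact Sum.inr_ne_inl hEq
      rw [Finset.sum_insert hn1, Finset.sum_insert hn2, Finset.sum_insert hn3,
        Finset.sum_image hinj] at hsum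
      omega
    have hE0 : ∑ i ∈ (L0 p q).erase (i0 p q hp), (f (Sum.inr (eVe p q i))).card ≤
        ∑ i ∈ L0 p q, (f (Sum.inr (eVe p q i))).card :=
      Finset.sum_le_sum_of_subset (Finset.erase_subset _ _)
    have hE1 : ∑ i ∈ (L1 p q).erase (j0 p q hq), (f (Sum.inr (eVe p q i))).card ≤
        ∑ i ∈ L1 p q, (f (Sum.inr (eVe p q i))).card :=
      Finset.sum_le_sum_of_subset (Finset.erase_subset _ _)
    -- pair decomposition at i0 / j0
    have hP0 : ((f (Sum.inl (i0 p q hp))).card + (f (Sum.inr (eVe p q (i0 p q hp)))).card) +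
        ∑ i ∈ (L0 p q).erase (i0 p q hp),
          ((f (Sum.inl i)).card + (f (Sum.inr (eVe p q i))).card) =
        ∑ i ∈ L0 p q, ((f (Sum.inl i)).card + (f (Sum.inr (eVe p q i))).card) :=
      Finset.add_sum_erase _ (fun i => (f (Sum.inl i)).card + (f (Sum.inr (eVe p q i))).card) (i0_mem p q hp)
    have hP1 : ((f (Sum.inl (j0 p q hq))).card + (f (Sum.inr (eVe p q (j0 p q hq)))).card) +
        ∑ i ∈ (L1 p q).erase (j0 p q hq),
          ((f (Sum.inl i)).card + (f (Sum.inr (eVe p q i))).card) =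
        ∑ i ∈ L1 p q, ((f (Sum.inl i)).card + (f (Sum.inr (eVe p q i))).card) :=
      Finset.add_sum_erase _ (fun i => (f (Sum.inl i)).card + (f (Sum.inr (eVe p q i))).card) (j0_mem p q hq)
    have hQ0 : p - 1 ≤ ∑ i ∈ (L0 p q).erase (i0 p q hp),
        ((f (Sum.inl i)).card + (f (Sum.inr (eVe p q i))).card) := by
      have step : ∀ i ∈ (L0 p q).erase (i0 p q hp), 1 ≤
          (f (Sum.inl i)).card + (f (Sum.inr (eVe p q i))).card := by
        intro i hi
        have h2 : 2 ≤ i.val := by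
          have := (mem_L0 p q).1 (Finset.mem_of_mem_erase hi); omega
        by_cases h : (f (Sum.inl i)).card = 0
        · have := key1 i h2 h; omega
        · omega
      calc p - 1 = ((L0 p q).erase (i0 p q hp)).card := by
            rw [Finset.card_erase_of_mem (i0_mem p q hp), card_L0]
        _ = ∑ i ∈ (L0 p q).erase (i0 p q hp), 1 := by rw [Finset.sum_const, smul_eq_mul, mul_one]
        _ ≤ _ := Finset.sum_le_sum step
    have hQ1 : q - 1 ≤ ∑ i ∈ (L1 p q).erase (j0 p q hq),
        ((f (Sum.inl i)).card + (f (Sum.inr (eVe p q i))).card) := by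
      have step : ∀ i ∈ (L1 p q).erase (j0 p q hq), 1 ≤
          (f (Sum.inl i)).card + (f (Sum.inr (eVe p q i))).card := by
        intro i hi
        have h2 : 2 ≤ i.val := by
          have := (mem_L1 p q).1 (Finset.mem_of_mem_erase hi); omega
        by_cases h : (f (Sum.inl i)).card = 0
        · have := key1 i h2 h; omega
        · omega
      calc q - 1 = ((L1 p q).erase (j0 p q hq)).card := by
            rw [Finset.card_erase_of_mem (j0_mem p q hq), card_L1]
        _ = ∑ i ∈ (L1 p q).erase (j0 p q hq), 1 := by rw [Finset.sum_const, smul_eq_mul, mul_one]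
        _ ≤ _ := Finset.sum_le_sum step
    omega

end S17

/-- For `p, q ≥ 1`, `γ*_{r3}(DS_{p,q}) = p + q + 3`. -/
theorem stmt17 (p q : ℕ) (hp : 1 ≤ p) (hq : 1 ≤ q) :
    mrdn (doubleStar p q) 3 = p + q + 3 := by
  unfold mrdn rdn
  letI := Classical.decEq (Fin (p + q + 2))
  letI : DecidableRel (doubleStar p q).Adj := fun _ _ => Classical.dec _
  refine le_antisymm (Nat.sInf_le ⟨S17.fUB p q, S17.fUB_isRDF p q, S17.fUB_weight p q⟩) ?_
  refine le_csInf ⟨p + q + 3, S17.fUB p q, S17.fUB_isRDF p q, S17.fUB_weight p q⟩ ?_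
  rintro m ⟨g, hg, rfl⟩
  exact S17.lower p q hp hq g hg
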